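/- Let Q be a quasi order and x,y ∈ H_f(Q), q ∈ Q. If p ≤_Q q for every p ∈ supp(x), and there exists p ∈ supp(y) with q ≤_Q p or (y is the urelement of some q' with q ≤_Q q'), then x ≤ y. Equivalently, in H_f(Q): if supp(x) ≤ q and q ≤ supp(y) (where the finite sets supp(x), supp(y) ⊆ Q are regarded as the elements of H_f(Q) whose members are the corresponding urelements, and q is regarded as an urelement), then x ≤ y. -/

import Mathlib

/-- Hereditarily finite sets with urelements from `Q`. -/
inductive HF (Q : Type*) where
  | ur : Q → HF Q
  | set : List (HF Q) → HF Q

namespace HF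

/-- The quasi order on `HF Q`. -/
def le {Q : Type*} [LE Q] : HF Q → HF Q → Prop
  | .ur p, .ur q => p ≤ q
  | .ur p, .set b => ∃ y, ∃ _ : y ∈ b, le (.ur p) y
  | .set a, .ur q => ∀ x, x ∈ a → le x (.ur q)
  | .set a, .set b => ∀ x, x ∈ a → ∃ y, ∃ _ : y ∈ b, le x y
termination_by x y => sizeOf x + sizeOf y
decreasing_by
  all_goals simp_wf
  · have := List.sizeOf_lt_of_mem ‹_ ∈ b›; omega
  · have := List.sizeOf_lt_of_mem ‹_ ∈ a›; omega
  · have h1 := List.sizeOf_lt_of_mem ‹_ ∈ a›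
    have h2 := List.sizeOf_lt_of_mem ‹_ ∈ b›; omega

/-- The support of an element of `HF Q`: the list of urelements occurring in it. -/
def supp {Q : Type*} : HF Q → List Q
  | .ur q => [q]
  | .set a => a.attach.flatMap (fun x => supp x.1)
termination_by x => sizeOf x
decreasing_by
  simp_wf
  have := List.sizeOf_lt_of_mem x.2; omega

end HF

-- statement 18: if supp(x) ≤ q and q ≤ supp(y) in H_f(Q) (supports regarded as
-- set-elements of H_f(Q), q as an urelement), then x ≤ y.
lemma HF.mem_supp_set {Q : Type*} {p : Q} {a : List (HF Q)} :
    p ∈ HF.supp (.set a) ↔ ∃ x ∈ a, p ∈ HF.supp x := by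
  rw [HF.supp]
  simp [List.mem_flatMap]

lemma HF.aux {Q : Type*} [Preorder Q] (q : Q) :
    ∀ x y : HF Q, (∀ p ∈ x.supp, p ≤ q) → (∃ p ∈ y.supp, q ≤ p) → HF.le x y
  | .ur p, .ur r => by
    intro h1 h2
    rw [HF.le]
    obtain ⟨r', hr', hle⟩ := h2
    rw [HF.supp] at h1 hr'
    simp at h1 hr'
    subst hr'
    exact le_trans (h1) hle
  | .ur p, .set b => by
    intro h1 h2
    obtain ⟨r, hr, hle⟩ := h2
    rw [HF.mem_supp_set] at hr
    obtain ⟨y', hy', hry'⟩ := hr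
    rw [HF.le]
    exact ⟨y', hy', HF.aux q (.ur p) y' h1 ⟨r, hry', hle⟩⟩
  | .set a, .ur r => by
    intro h1 h2
    rw [HF.le]
    intro x hx
    exact HF.aux q x (.ur r) (fun p hp => h1 p (HF.mem_supp_set.mpr ⟨x, hx, hp⟩)) h2
  | .set a, .set b => by
    intro h1 h2
    obtain ⟨p, hp, hle⟩ := h2
    rw [HF.mem_supp_set] at hp
    obtain ⟨y', hy', hpy'⟩ := hp
    rw [HF.le]
    intro x hx
    exact ⟨y', hy', HF.aux q x y'
      (fun p hp => h1 p (HF.mem_supp_set.mpr ⟨x, hx, hp⟩)) ⟨p, hpy', hle⟩⟩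
termination_by x y => sizeOf x + sizeOf y
decreasing_by
  · have := List.sizeOf_lt_of_mem hy'; simp; omega
  · have := List.sizeOf_lt_of_mem hx; simp; omega
  · have h1 := List.sizeOf_lt_of_mem hx
    have h2 := List.sizeOf_lt_of_mem hy'; simp; omega

theorem stmt18 {Q : Type*} [Preorder Q] (x y : HF Q) (q : Q)
    (h1 : HF.le (HF.set ((HF.supp x).map HF.ur)) (HF.ur q))
    (h2 : HF.le (HF.ur q) (HF.set ((HF.supp y).map HF.ur))) :
    HF.le x y := by
  rw [HF.le] at h1
  rw [HF.le] at h2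
  apply HF.aux q
  · intro p hp
    have := h1 (.ur p) (List.mem_map_of_mem hp)
    rw [HF.le] at this
    exact this
  · obtain ⟨z, hz, hle⟩ := h2
    rw [List.mem_map] at hz
    obtain ⟨p, hp, rfl⟩ := hz
    rw [HF.le] at hle
    exact ⟨p, hp, hle⟩
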